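/- No ordinal κ satisfies reflection for first-order formulas with third-order parameters: specifically, let φ(X^{(3)}) be the first-order assertion (with third-order parameter X^{(3)}) that every element of X^{(3)} is a bounded subset of the class of ordinals, and let U^{(3)} = {{ξ : ξ < α} : α an ordinal < κ} ∈ V_{κ+2}. Then φ^κ(U^{(3)}) holds, but for every β < κ, φ^β(U^{(3),β}) fails, since U^{(3),β} contains the set {ξ : ξ < β}, which is unbounded in On ∩ V_β. Hence there is no κ such that whenever φ^κ(X^{(3)}) holds for such a sentence φ and parameter X^{(3)} ∈ V_{κ+2}, then φ^β(X^{(3),β}) holds for some β < κ. -/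

import Mathlib

noncomputable def Vset (o : Ordinal.{0}) : ZFSet.{0} :=
  ZFSet.sUnion (ZFSet.range fun i : o.ToType =>
    ZFSet.powerset (Vset ((Ordinal.ToType.mk (o := o)).symm i).val))
termination_by o
decreasing_by exact ((Ordinal.ToType.mk (o := o)).symm i).2

/-- The von Neumann ordinal `{ξ : ξ < o}` corresponding to the ordinal `o`. -/
noncomputable def ordToZF (o : Ordinal.{0}) : ZFSet.{0} :=
  ZFSet.range fun i : o.ToType =>
    ordToZF ((Ordinal.ToType.mk (o := o)).symm i).val
termination_by o
decreasing_by exact ((Ordinal.ToType.mk (o := o)).symm i).2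

/-- The relativisation `φ^θ(X)` to `V_θ` of the first-order assertion
`φ(X^{(3)})` (with third-order parameter `X`) stating that every element of `X` is a
bounded subset of the class of ordinals: every `Y ∈ X` is included in some von Neumann
ordinal `{ξ : ξ < b}` with `b` an ordinal of `V_θ`, i.e. `b < θ`. -/
noncomputable def phiAt (θ : Ordinal.{0}) (X : ZFSet.{0}) : Prop :=
  ∀ Y ∈ X, ∃ b < θ, ∀ ξ ∈ Y, ξ ∈ ordToZF b

/-- The third-order parameter `U^{(3)} = {{ξ : ξ < α} : α < κ}`. -/
noncomputable def Uset (κ : Ordinal.{0}) : ZFSet.{0} :=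
  ZFSet.sep (fun Y => ∃ α < κ, Y = ordToZF α) (Vset (κ + 1))

/-- The relativisation `X^{(3),β} = {Y^{(2),β} : Y ∈ X} = {Y ∩ V_β : Y ∈ X}` of a
third-order parameter `X` to the level `V_β`. -/
noncomputable def rel3 (β : Ordinal.{0}) (X : ZFSet.{0}) : ZFSet.{0} :=
  ZFSet.sep (fun d => ∃ Y ∈ X, d = Y ∩ Vset β) (ZFSet.powerset (Vset β))

lemma mem_ordToZF {x : ZFSet.{0}} {o : Ordinal.{0}} :
    x ∈ ordToZF o ↔ ∃ p < o, x = ordToZF p := by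
  rw [ordToZF, ZFSet.mem_range]
  constructor
  · rintro ⟨i, rfl⟩
    exact ⟨_, ((Ordinal.ToType.mk (o := o)).symm i).2, rfl⟩
  · rintro ⟨p, hp, rfl⟩
    refine ⟨(Ordinal.ToType.mk (o := o)) ⟨p, hp⟩, ?_⟩
    simp

lemma mem_Vset {x : ZFSet.{0}} {o : Ordinal.{0}} :
    x ∈ Vset o ↔ ∃ p < o, x ⊆ Vset p := by
  rw [Vset, ZFSet.mem_sUnion]
  constructor
  · rintro ⟨S, hS, hx⟩
    rw [ZFSet.mem_range] at hS
    obtain ⟨i, rfl⟩ := hS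
    rw [ZFSet.mem_powerset] at hx
    exact ⟨_, ((Ordinal.ToType.mk (o := o)).symm i).2, hx⟩
  · rintro ⟨p, hp, hx⟩
    refine ⟨ZFSet.powerset (Vset p), ?_, ZFSet.mem_powerset.2 hx⟩
    rw [ZFSet.mem_range]
    exact ⟨(Ordinal.ToType.mk (o := o)) ⟨p, hp⟩, by simp⟩

lemma Vset_mono {p q : Ordinal.{0}} (h : p ≤ q) : Vset p ⊆ Vset q := by
  intro x hx
  rw [mem_Vset] at hx ⊢
  obtain ⟨r, hr, hx⟩ := hx
  exact ⟨r, lt_of_lt_of_le hr h, hx⟩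

lemma ordToZF_subset_Vset (o : Ordinal.{0}) : ordToZF o ⊆ Vset o := by
  induction o using Ordinal.induction with
  | h o ih =>
    intro x hx
    obtain ⟨p, hp, rfl⟩ := mem_ordToZF.1 hx
    exact mem_Vset.2 ⟨p, hp, ih p hp⟩

/-- No ordinal `κ` satisfies reflection for first-order formulas with third-order
parameters: `U^{(3)} ∈ V_{κ+2}` and `φ^κ(U^{(3)})` holds, but `φ^β(U^{(3),β})` fails
for every `β < κ`; hence no `κ` reflects every such parameter `X^{(3)} ∈ V_{κ+2}`. -/
theorem stmt6 (κ : Ordinal.{0}) :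
    Uset κ ∈ Vset (κ + 2) ∧
    phiAt κ (Uset κ) ∧
    (∀ β < κ, ¬ phiAt β (rel3 β (Uset κ))) ∧
    ¬ (∀ X ∈ Vset (κ + 2), phiAt κ X → ∃ β < κ, phiAt β (rel3 β X)) := by
  have hord_in : ∀ {b o : Ordinal.{0}}, b < o → ordToZF b ∈ ordToZF o :=
    fun h => mem_ordToZF.2 ⟨_, h, rfl⟩
  have hU : ∀ {β : Ordinal.{0}}, β < κ → ordToZF β ∈ Uset κ := by
    intro β hβ
    rw [Uset, ZFSet.mem_sep]
    refine ⟨mem_Vset.2 ⟨κ, by simp, ?_⟩, β, hβ, rfl⟩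
    exact (ordToZF_subset_Vset β).trans (Vset_mono hβ.le)
  have hphi : phiAt κ (Uset κ) := by
    intro Y hY
    rw [Uset, ZFSet.mem_sep] at hY
    obtain ⟨-, α, hα, rfl⟩ := hY
    exact ⟨α, hα, fun ξ h => h⟩
  have hfail : ∀ β < κ, ¬ phiAt β (rel3 β (Uset κ)) := by
    intro β hβ hcon
    have hmem : ordToZF β ∈ rel3 β (Uset κ) := by
      rw [rel3, ZFSet.mem_sep, ZFSet.mem_powerset]
      refine ⟨ordToZF_subset_Vset β, ordToZF β, hU hβ, ?_⟩
      ext x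
      simp only [ZFSet.mem_inter]
      exact ⟨fun h => ⟨h, ordToZF_subset_Vset β h⟩, fun h => h.1⟩
    obtain ⟨b, hb, hbnd⟩ := hcon _ hmem
    exact ZFSet.mem_irrefl _ (hbnd _ (hord_in hb))
  refine ⟨?_, hphi, hfail, ?_⟩
  · refine mem_Vset.2 ⟨κ + 1, by exact (add_lt_add_iff_left κ).2 one_lt_two, fun x hx => ?_⟩
    rw [Uset, ZFSet.mem_sep] at hx
    exact hx.1
  · intro h
    obtain ⟨β, hβ, hp⟩ := h (Uset κ) (mem_Vset.2 ⟨κ + 1, by exact (add_lt_add_iff_left κ).2 one_lt_two,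
      fun x hx => (ZFSet.mem_sep.1 (by rwa [Uset] at hx)).1⟩) hphi
    exact hfail β hβ hp
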